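/- Fix real u, v and μ > 0, and fix (λ,θ) ∈ ℝⁿ × ℝⁿ with λ in the interior domain λ₁ > … > λ_n > max(|v|,|u|), λ_i − λ_{i+1} > μ. Define for r > 0 the function H_r(λ,θ) = V(rλ; ru, rv, rμ) + e^{r(v−u)} ∑_k [cos θ_k / cosh²(rλ_k)]·√(1 − sinh²(rv)/sinh²(rλ_k))·√(1 − sinh²(ru)/sinh²(rλ_k))·∏_{l≠k} √(1 − sinh²(rμ)/sinh²(r(λ_k−λ_l)))·√(1 − sinh²(rμ)/sinh²(r(λ_k+λ_l))), where V(λ;u,v,μ) = e^{v−u}[ (sinh v sinh u / sinh²μ)∏_k(1 − sinh²μ/sinh²λ_k) − (cosh v cosh u / sinh²μ)∏_k(1 + sinh²μ/cosh²λ_k) + n e^{u−v} + cosh(v−u)/sinh²μ ]. Then lim_{r→0⁺} H_r(λ,θ) = (uv/μ²)[∏_k(1 − μ²/λ_k²) − 1] + ∑_k cos θ_k · √(1 − v²/λ_k²)·√(1 − u²/λ_k²)·∏_{l≠k} √(1 − μ²/(λ_k−λ_l)²)·√(1 − μ²/(λ_k+λ_l)²). -/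

import Mathlib

open Finset Real

open Filter Topology in
private lemma sinh_slope (a : ℝ) :
    Filter.Tendsto (fun r => Real.sinh (r * a) / r) (nhdsWithin 0 (Set.Ioi 0)) (nhds a) := by
  have h : HasDerivAt (fun r : ℝ => Real.sinh (r * a)) a 0 := by
    have h1 := (Real.hasDerivAt_sinh (0 * a)).comp 0 ((hasDerivAt_id (0:ℝ)).mul_const a)
    simpa [Function.comp_def] using h1
  have h2 := hasDerivAt_iff_tendsto_slope.1 h
  have h3 : Filter.Tendsto (slope (fun r : ℝ => Real.sinh (r * a)) 0)
      (nhdsWithin 0 (Set.Ioi 0)) (nhds a) :=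
    h2.mono_left (nhdsWithin_mono _ (fun x hx => ne_of_gt hx))
  refine h3.congr (fun r => ?_)
  simp [slope_def_field]

open Filter Topology in
private lemma sinh_ratio (a : ℝ) {b : ℝ} (hb : b ≠ 0) :
    Filter.Tendsto (fun r => Real.sinh (r * a) / Real.sinh (r * b))
      (nhdsWithin 0 (Set.Ioi 0)) (nhds (a / b)) := by
  have h := (sinh_slope a).div (sinh_slope b) hb
  refine h.congr' ?_
  filter_upwards [self_mem_nhdsWithin] with r hr
  have hr0 : r ≠ 0 := ne_of_gt hr
  simp only [Pi.div_apply]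
  have hsb : Real.sinh (r * b) ≠ 0 := by
    simpa [Real.sinh_eq_zero] using mul_ne_zero hr0 hb
  field_simp

open Filter Topology in
private lemma sinh_ratio_sq (a : ℝ) {b : ℝ} (hb : b ≠ 0) :
    Filter.Tendsto (fun r => Real.sinh (r * a) ^ 2 / Real.sinh (r * b) ^ 2)
      (nhdsWithin 0 (Set.Ioi 0)) (nhds (a ^ 2 / b ^ 2)) := by
  have h := (sinh_ratio a hb).pow 2
  simpa [div_pow] using h

open Filter Topology in
private lemma prod_one_add_sub_one_div {ι : Type*} (s : Finset ι) {l : Filter ℝ}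
    (t : ℝ → ℝ) (d : ι → ℝ → ℝ) (e : ι → ℝ)
    (ht0 : Filter.Tendsto t l (nhds 0)) (htne : ∀ᶠ r in l, t r ≠ 0)
    (hd : ∀ k, Filter.Tendsto (d k) l (nhds (e k))) :
    Filter.Tendsto (fun r => ((∏ k ∈ s, (1 + t r * d k r)) - 1) / t r) l
      (nhds (∑ k ∈ s, e k)) := by
  classical
  induction s using Finset.cons_induction with
  | empty =>
    have h0 : Filter.Tendsto (fun _ : ℝ => (0:ℝ)) l (nhds 0) := tendsto_const_nhds
    simpa using h0.congr (fun r => by simp)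
  | cons a s ha ih =>
    have hprod : Filter.Tendsto (fun r => ∏ k ∈ s, (1 + t r * d k r)) l (nhds 1) := by
      have := tendsto_finset_prod (f := fun k r => 1 + t r * d k r)
        (a := fun k => 1 + 0 * e k) s (fun i _ => tendsto_const_nhds.add ((ht0.mul (hd i))))
      simpa using this
    have key := ih.add ((hd a).mul hprod)
    rw [Finset.sum_cons]
    have : (∑ k ∈ s, e k) + e a * 1 = e a + ∑ k ∈ s, e k := by ring
    rw [← this]
    refine key.congr' ?_
    filter_upwards [htne] with r htr
    rw [Finset.prod_cons]
    field_simp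
    ring

set_option maxHeartbeats 1000000 in
/-- The cotangent-bundle limit `r → 0⁺` of the scaled RSvD Hamiltonian `H_r`
converges to the dual of the rational `BC_n` Sutherland Hamiltonian. -/
theorem cotangent_bundle_limit (n : ℕ) (u v μ : ℝ) (hμ : 0 < μ)
    (lam θ : Fin n → ℝ)
    (hord : ∀ i j : Fin n, i < j → lam j < lam i)
    (hlow : ∀ i, max |v| |u| < lam i)
    (hgap : ∀ i : Fin n, ∀ h : (i : ℕ) + 1 < n, μ < lam i - lam ⟨(i : ℕ) + 1, h⟩)
    (H : ℝ → ℝ)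
    (hH : H = fun r =>
      Real.exp (r * (v - u)) *
        (Real.sinh (r * v) * Real.sinh (r * u) / Real.sinh (r * μ) ^ 2 *
            ∏ k, (1 - Real.sinh (r * μ) ^ 2 / Real.sinh (r * lam k) ^ 2)
          - Real.cosh (r * v) * Real.cosh (r * u) / Real.sinh (r * μ) ^ 2 *
            ∏ k, (1 + Real.sinh (r * μ) ^ 2 / Real.cosh (r * lam k) ^ 2)
          + n * Real.exp (r * (u - v)) + Real.cosh (r * (v - u)) / Real.sinh (r * μ) ^ 2)
      + Real.exp (r * (v - u)) *
          ∑ k, Real.cos (θ k) / Real.cosh (r * lam k) ^ 2 *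
            Real.sqrt (1 - Real.sinh (r * v) ^ 2 / Real.sinh (r * lam k) ^ 2) *
            Real.sqrt (1 - Real.sinh (r * u) ^ 2 / Real.sinh (r * lam k) ^ 2) *
            ∏ l ∈ univ.erase k,
              Real.sqrt (1 - Real.sinh (r * μ) ^ 2 /
                  Real.sinh (r * (lam k - lam l)) ^ 2) *
              Real.sqrt (1 - Real.sinh (r * μ) ^ 2 /
                  Real.sinh (r * (lam k + lam l)) ^ 2)) :
    Filter.Tendsto H (nhdsWithin 0 (Set.Ioi 0)) (nhds
      (u * v / μ ^ 2 * (∏ k, (1 - μ ^ 2 / lam k ^ 2) - 1)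
        + ∑ k, Real.cos (θ k) *
            Real.sqrt (1 - v ^ 2 / lam k ^ 2) *
            Real.sqrt (1 - u ^ 2 / lam k ^ 2) *
            ∏ l ∈ univ.erase k,
              Real.sqrt (1 - μ ^ 2 / (lam k - lam l) ^ 2) *
              Real.sqrt (1 - μ ^ 2 / (lam k + lam l) ^ 2))) := by
  subst hH
  set L := nhdsWithin (0:ℝ) (Set.Ioi 0) with hL
  have hμ0 : μ ≠ 0 := ne_of_gt hμ
  have hlam_pos : ∀ i, 0 < lam i := fun i =>
    ((abs_nonneg v).trans (le_max_left _ _)).trans_lt (hlow i)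
  have hlam0 : ∀ i, lam i ≠ 0 := fun i => ne_of_gt (hlam_pos i)
  have hsub : ∀ k l : Fin n, k ≠ l → lam k - lam l ≠ 0 := by
    intro k l hkl
    rcases lt_or_gt_of_ne hkl with h | h
    · exact ne_of_gt (sub_pos.2 (hord k l h))
    · exact ne_of_lt (sub_neg.2 (hord l k h))
  have hadd : ∀ k l : Fin n, lam k + lam l ≠ 0 :=
    fun k l => ne_of_gt (add_pos (hlam_pos k) (hlam_pos l))
  -- generic continuity limits
  have tlin : ∀ c : ℝ, Filter.Tendsto (fun r : ℝ => r * c) L (nhds 0) := by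
    intro c
    have : Continuous fun r : ℝ => r * c := continuous_id.mul continuous_const
    simpa using ((this.tendsto 0).mono_left nhdsWithin_le_nhds)
  have tcosh : ∀ c : ℝ, Filter.Tendsto (fun r : ℝ => Real.cosh (r * c)) L (nhds 1) := by
    intro c
    have := (Real.continuous_cosh.tendsto 0).comp (tlin c)
    simpa [Function.comp_def] using this
  have tsinh : ∀ c : ℝ, Filter.Tendsto (fun r : ℝ => Real.sinh (r * c)) L (nhds 0) := by
    intro c
    have := (Real.continuous_sinh.tendsto 0).comp (tlin c)
    simpa [Function.comp_def] using this
  have texp : ∀ c : ℝ, Filter.Tendsto (fun r : ℝ => Real.exp (r * c)) L (nhds 1) := by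
    intro c
    have := (Real.continuous_exp.tendsto 0).comp (tlin c)
    simpa [Function.comp_def] using this
  have tsqrt : ∀ {f : ℝ → ℝ} {c : ℝ}, Filter.Tendsto f L (nhds c) →
      Filter.Tendsto (fun r => Real.sqrt (f r)) L (nhds (Real.sqrt c)) :=
    fun hf => (Real.continuous_sqrt.tendsto _).comp hf
  have hsne : ∀ᶠ r in L, Real.sinh (r * μ) ≠ 0 := by
    filter_upwards [self_mem_nhdsWithin] with r hr
    intro h
    exact (mul_pos hr hμ).ne' (by rwa [Real.sinh_eq_zero] at h)
  -- pieces of the potential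
  have p1 : Filter.Tendsto
      (fun r => Real.sinh (r * v) * Real.sinh (r * u) / Real.sinh (r * μ) ^ 2) L
      (nhds (v / μ * (u / μ))) := by
    have := (sinh_ratio v hμ0).mul (sinh_ratio u hμ0)
    refine this.congr (fun r => ?_)
    rw [div_mul_div_comm, sq]
  have p2 : Filter.Tendsto
      (fun r => (∏ k, (1 - Real.sinh (r * μ) ^ 2 / Real.sinh (r * lam k) ^ 2)) - 1) L
      (nhds ((∏ k, (1 - μ ^ 2 / lam k ^ 2)) - 1)) := by
    refine Filter.Tendsto.sub ?_ tendsto_const_nhds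
    exact tendsto_finset_prod _ (fun k _ =>
      tendsto_const_nhds.sub (sinh_ratio_sq μ (hlam0 k)))
  have p3 : Filter.Tendsto
      (fun r => ((∏ k, (1 + Real.sinh (r * μ) ^ 2 / Real.cosh (r * lam k) ^ 2)) - 1)
        / Real.sinh (r * μ) ^ 2) L (nhds (n:ℝ)) := by
    have ht0 : Filter.Tendsto (fun r => Real.sinh (r * μ) ^ 2) L (nhds 0) := by
      simpa using (tsinh μ).pow 2
    have htne : ∀ᶠ r in L, Real.sinh (r * μ) ^ 2 ≠ 0 := by
      filter_upwards [hsne] with r hr using pow_ne_zero 2 hr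
    have hd : ∀ k : Fin n, Filter.Tendsto (fun r => (Real.cosh (r * lam k) ^ 2)⁻¹) L
        (nhds 1) := by
      intro k
      have := ((tcosh (lam k)).pow 2).inv₀ (by norm_num)
      simpa using this
    have key := prod_one_add_sub_one_div Finset.univ
      (fun r => Real.sinh (r * μ) ^ 2) (fun k r => (Real.cosh (r * lam k) ^ 2)⁻¹)
      (fun _ => 1) ht0 htne hd
    have key' : Filter.Tendsto
        (fun r => ((∏ k : Fin n, (1 + Real.sinh (r * μ) ^ 2 * (Real.cosh (r * lam k) ^ 2)⁻¹)) - 1)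
          / Real.sinh (r * μ) ^ 2) L (nhds (n:ℝ)) := by simpa using key
    refine key'.congr (fun r => ?_)
    simp [div_eq_mul_inv]
  have p4 : Filter.Tendsto (fun r => Real.cosh (r * v) * Real.cosh (r * u)) L (nhds 1) := by
    simpa using (tcosh v).mul (tcosh u)
  have p5 : Filter.Tendsto (fun r => (n : ℝ) * Real.exp (r * (u - v))) L (nhds n) := by
    simpa using tendsto_const_nhds.mul (texp (u - v))
  -- the sum part
  have psum : Filter.Tendsto
      (fun r => ∑ k, Real.cos (θ k) / Real.cosh (r * lam k) ^ 2 *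
          Real.sqrt (1 - Real.sinh (r * v) ^ 2 / Real.sinh (r * lam k) ^ 2) *
          Real.sqrt (1 - Real.sinh (r * u) ^ 2 / Real.sinh (r * lam k) ^ 2) *
          ∏ l ∈ univ.erase k,
            Real.sqrt (1 - Real.sinh (r * μ) ^ 2 / Real.sinh (r * (lam k - lam l)) ^ 2) *
            Real.sqrt (1 - Real.sinh (r * μ) ^ 2 / Real.sinh (r * (lam k + lam l)) ^ 2)) L
      (nhds (∑ k, Real.cos (θ k) *
          Real.sqrt (1 - v ^ 2 / lam k ^ 2) *
          Real.sqrt (1 - u ^ 2 / lam k ^ 2) *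
          ∏ l ∈ univ.erase k,
            Real.sqrt (1 - μ ^ 2 / (lam k - lam l) ^ 2) *
            Real.sqrt (1 - μ ^ 2 / (lam k + lam l) ^ 2))) := by
    refine tendsto_finset_sum _ (fun k _ => ?_)
    have t1 : Filter.Tendsto (fun r => Real.cos (θ k) / Real.cosh (r * lam k) ^ 2) L
        (nhds (Real.cos (θ k))) := by
      have := (tendsto_const_nhds (x := Real.cos (θ k))).div ((tcosh (lam k)).pow 2)
        (by norm_num : (1:ℝ) ^ 2 ≠ 0)
      simpa [Pi.div_def] using this
    have t2 := tsqrt ((tendsto_const_nhds (x := (1:ℝ))).sub (sinh_ratio_sq v (hlam0 k)))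
    have t3 := tsqrt ((tendsto_const_nhds (x := (1:ℝ))).sub (sinh_ratio_sq u (hlam0 k)))
    have t4 : Filter.Tendsto
        (fun r => ∏ l ∈ univ.erase k,
          Real.sqrt (1 - Real.sinh (r * μ) ^ 2 / Real.sinh (r * (lam k - lam l)) ^ 2) *
          Real.sqrt (1 - Real.sinh (r * μ) ^ 2 / Real.sinh (r * (lam k + lam l)) ^ 2)) L
        (nhds (∏ l ∈ univ.erase k,
          Real.sqrt (1 - μ ^ 2 / (lam k - lam l) ^ 2) *
          Real.sqrt (1 - μ ^ 2 / (lam k + lam l) ^ 2))) := by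
      refine tendsto_finset_prod _ (fun l hl => ?_)
      have hkl : k ≠ l := (Finset.ne_of_mem_erase hl).symm
      exact (tsqrt (tendsto_const_nhds.sub (sinh_ratio_sq μ (hsub k l hkl)))).mul
        (tsqrt (tendsto_const_nhds.sub (sinh_ratio_sq μ (hadd k l))))
    exact ((t1.mul t2).mul t3).mul t4
  -- assemble
  have big : Filter.Tendsto
      (fun r =>
        Real.exp (r * (v - u)) *
          (Real.sinh (r * v) * Real.sinh (r * u) / Real.sinh (r * μ) ^ 2 *
              ((∏ k, (1 - Real.sinh (r * μ) ^ 2 / Real.sinh (r * lam k) ^ 2)) - 1)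
            - Real.cosh (r * v) * Real.cosh (r * u) *
              (((∏ k, (1 + Real.sinh (r * μ) ^ 2 / Real.cosh (r * lam k) ^ 2)) - 1)
                / Real.sinh (r * μ) ^ 2)
            + n * Real.exp (r * (u - v)))
        + Real.exp (r * (v - u)) *
            ∑ k, Real.cos (θ k) / Real.cosh (r * lam k) ^ 2 *
              Real.sqrt (1 - Real.sinh (r * v) ^ 2 / Real.sinh (r * lam k) ^ 2) *
              Real.sqrt (1 - Real.sinh (r * u) ^ 2 / Real.sinh (r * lam k) ^ 2) *
              ∏ l ∈ univ.erase k,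
                Real.sqrt (1 - Real.sinh (r * μ) ^ 2 /
                    Real.sinh (r * (lam k - lam l)) ^ 2) *
                Real.sqrt (1 - Real.sinh (r * μ) ^ 2 /
                    Real.sinh (r * (lam k + lam l)) ^ 2)) L
      (nhds (1 * (v / μ * (u / μ) * ((∏ k, (1 - μ ^ 2 / lam k ^ 2)) - 1) - 1 * n + n)
        + 1 * ∑ k, Real.cos (θ k) *
            Real.sqrt (1 - v ^ 2 / lam k ^ 2) *
            Real.sqrt (1 - u ^ 2 / lam k ^ 2) *
            ∏ l ∈ univ.erase k,
              Real.sqrt (1 - μ ^ 2 / (lam k - lam l) ^ 2) *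
              Real.sqrt (1 - μ ^ 2 / (lam k + lam l) ^ 2))) := by
    exact ((texp (v - u)).mul (((p1.mul p2).sub (p4.mul p3)).add p5)).add
      ((texp (v - u)).mul psum)
  have hval : (1 * ((v / μ * (u / μ)) * ((∏ k, (1 - μ ^ 2 / lam k ^ 2)) - 1) - 1 * (n:ℝ) + n)
      + 1 * ∑ k, Real.cos (θ k) *
          Real.sqrt (1 - v ^ 2 / lam k ^ 2) *
          Real.sqrt (1 - u ^ 2 / lam k ^ 2) *
          ∏ l ∈ univ.erase k,
            Real.sqrt (1 - μ ^ 2 / (lam k - lam l) ^ 2) *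
            Real.sqrt (1 - μ ^ 2 / (lam k + lam l) ^ 2))
      = u * v / μ ^ 2 * ((∏ k, (1 - μ ^ 2 / lam k ^ 2)) - 1)
        + ∑ k, Real.cos (θ k) *
            Real.sqrt (1 - v ^ 2 / lam k ^ 2) *
            Real.sqrt (1 - u ^ 2 / lam k ^ 2) *
            ∏ l ∈ univ.erase k,
              Real.sqrt (1 - μ ^ 2 / (lam k - lam l) ^ 2) *
              Real.sqrt (1 - μ ^ 2 / (lam k + lam l) ^ 2) := by
    ring
  rw [← hval]
  refine big.congr' ?_
  filter_upwards [hsne] with r hs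
  have hco : Real.cosh (r * (v - u)) =
      Real.cosh (r * v) * Real.cosh (r * u) - Real.sinh (r * v) * Real.sinh (r * u) := by
    rw [mul_sub, Real.cosh_sub]
  rw [hco]
  field_simp
  ring
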